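/- Let (X, ≤) be a densely ordered linear order. Then the cardinality of the set of surjective order-preserving self-maps of X is at most the cardinality of the set of order-embeddings of X into itself. -/

import Mathlib

/-- Key lemma: if `f` is monotone with right inverse `g`, and `y < f x`,
then there is `z > y` with `g z ≤ x` (using density). -/
lemma stmt_5_key {X : Type*} [LinearOrder X] [DenselyOrdered X] {f g : X → X}
    (hm : Monotone f) (hg : ∀ y, f (g y) = y) {x y : X} (h : y < f x) :
    ∃ z, y < z ∧ g z ≤ x := by
  obtain ⟨z, hyz, hzf⟩ := exists_between h
  refine ⟨z, hyz, ?_⟩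
  by_contra hc
  push_neg at hc
  have : f x ≤ z := by
    have := hm hc.le
    rwa [hg z] at this
  exact absurd hzf (not_lt.mpr this)

/-- If two monotone maps share a common right inverse, one is ≤ the other. -/
lemma stmt_5_le {X : Type*} [LinearOrder X] [DenselyOrdered X] {f₁ f₂ g : X → X}
    (hm₁ : Monotone f₁) (hm₂ : Monotone f₂)
    (hg₁ : ∀ y, f₁ (g y) = y) (hg₂ : ∀ y, f₂ (g y) = y) (x : X) : f₂ x ≤ f₁ x := by
  by_contra h
  push_neg at h
  obtain ⟨z, hz1, hz2⟩ := stmt_5_key hm₂ hg₂ h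
  have : z ≤ f₁ x := by
    have := hm₁ hz2
    rwa [hg₁ z] at this
  exact absurd hz1 (not_lt.mpr this)

theorem stmt_5 {X : Type*} [LinearOrder X] [DenselyOrdered X] :
    Cardinal.mk {f : X → X // Function.Surjective f ∧ Monotone f} ≤
      Cardinal.mk {g : X → X // StrictMono g} := by
  refine Cardinal.mk_le_of_injective (f := fun f =>
    (⟨Function.surjInv f.2.1, ?_⟩ : {g : X → X // StrictMono g})) ?_
  · intro a b hab
    by_contra hc
    push_neg at hc
    have h1 : f.1 (Function.surjInv f.2.1 a) = a := Function.surjInv_eq f.2.1 a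
    have h2 : f.1 (Function.surjInv f.2.1 b) = b := Function.surjInv_eq f.2.1 b
    have := f.2.2 hc
    rw [h1, h2] at this
    exact absurd hab (not_lt.mpr this)
  · rintro ⟨f₁, hs₁, hm₁⟩ ⟨f₂, hs₂, hm₂⟩ h
    simp only [Subtype.mk.injEq] at h ⊢
    set g₁ := Function.surjInv hs₁ with hg₁def
    have hgeq : Function.surjInv hs₁ = Function.surjInv hs₂ := congrArg Subtype.val h
    have hg₁ : ∀ y, f₁ (Function.surjInv hs₁ y) = y := fun y => Function.surjInv_eq hs₁ y
    have hg₂ : ∀ y, f₂ (Function.surjInv hs₁ y) = y := fun y => by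
      rw [hgeq]; exact Function.surjInv_eq hs₂ y
    funext x
    exact le_antisymm (stmt_5_le hm₂ hm₁ hg₂ hg₁ x) (stmt_5_le hm₁ hm₂ hg₁ hg₂ x)
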